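/- Let K be a primitive quartic CM field with real quadratic subfield K₀ of discriminant Δ₀, and let δ ∈ K₀ satisfy δ² = Δ₀. Let b be a fractional O_{K₀}-ideal with ℤ-basis b₁, b₂ satisfying b₁b₂ᶜ − b₂b₁ᶜ = N(b)·δ, where c is the nontrivial automorphism of K₀ and N(b) is the absolute norm of b. Let z ∈ K with z ∉ K₀ be such that z·b + b⁻¹ is a fractional O_K-ideal, and let φ₁, φ₂ be the two embeddings K → ℂ with Im φ(zδ⁻¹) > 0 (there are exactly two such embeddings, one from each complex-conjugate pair). Let Z be the symmetric 2×2 complex matrix with entries Z_{jk} = φ₁(zδ⁻¹b_j b_k) + φ₂(zδ⁻¹b_j b_k) for j, k ∈ {1,2}, and let Y = Im Z. Then Y is positive definite, det Y = I(z)·N(b)², and (2/√Δ₀)·N(b)·I(z)^{1/2} ≤ m₁(Y) ≤ m₂(Y) ≤ (2√Δ₀/3)·N(b)·I(z)^{1/2}. -/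

import Mathlib

open NumberField nonZeroDivisors Matrix

/-- The integral quadratic form attached to a real 2×2 matrix `Y`: `p ↦ pᵀ Y p`
for integer vectors `p ∈ ℤ²`. -/
noncomputable def quadForm (Y : Matrix (Fin 2) (Fin 2) ℝ) (p : Fin 2 → ℤ) : ℝ :=
  (fun i => (p i : ℝ)) ⬝ᵥ Y.mulVec (fun i => (p i : ℝ))

/-- The first consecutive minimum `m₁(Y)`. -/
noncomputable def m1 (Y : Matrix (Fin 2) (Fin 2) ℝ) : ℝ :=
  sInf {r : ℝ | ∃ p : Fin 2 → ℤ, p ≠ 0 ∧ quadForm Y p = r}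

/-- The second consecutive minimum `m₂(Y)`: the infimum of `qᵀYq` over integer vectors `q`
linearly independent of a vector `p` attaining `m₁(Y)`. -/
noncomputable def m2 (Y : Matrix (Fin 2) (Fin 2) ℝ) : ℝ :=
  sInf {r : ℝ | ∃ p q : Fin 2 → ℤ, p ≠ 0 ∧ quadForm Y p = m1 Y ∧
    LinearIndependent ℤ ![p, q] ∧ quadForm Y q = r}

/- ### Auxiliary lemmas -/

lemma quadForm_explicit (Y : Matrix (Fin 2) (Fin 2) ℝ) (p : Fin 2 → ℤ) :
    quadForm Y p = Y 0 0 * (p 0 : ℝ)^2 + (Y 0 1 + Y 1 0) * ((p 0 : ℝ) * (p 1 : ℝ))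
      + Y 1 1 * (p 1 : ℝ)^2 := by
  simp [quadForm, dotProduct, Matrix.mulVec, Fin.sum_univ_two]
  ring

noncomputable def blf (Y : Matrix (Fin 2) (Fin 2) ℝ) (p q : Fin 2 → ℤ) : ℝ :=
  Y 0 0 * ((p 0 : ℝ) * (q 0 : ℝ)) + Y 0 1 * ((p 0 : ℝ) * (q 1 : ℝ) + (p 1 : ℝ) * (q 0 : ℝ))
    + Y 1 1 * ((p 1 : ℝ) * (q 1 : ℝ))

lemma vec_ne_zero_iff (p : Fin 2 → ℤ) : p ≠ 0 ↔ p 0 ≠ 0 ∨ p 1 ≠ 0 := by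
  constructor
  · intro h
    by_contra hcon
    push_neg at hcon
    exact h (funext fun i => by fin_cases i <;> simp [hcon.1, hcon.2])
  · rintro (h | h) hp <;> simp [hp] at h

lemma int_abs_le_sq (n : ℤ) : |n| ≤ n ^ 2 := by
  nlinarith [sq_abs n, abs_nonneg n, sq_nonneg (|n| - 1)]

lemma gram_identity (Y : Matrix (Fin 2) (Fin 2) ℝ) (hsymm : Y 1 0 = Y 0 1)
    (p q : Fin 2 → ℤ) :
    quadForm Y p * quadForm Y q - blf Y p q ^ 2 =
      Y.det * ((p 0 : ℝ) * (q 1 : ℝ) - (p 1 : ℝ) * (q 0 : ℝ)) ^ 2 := by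
  rw [quadForm_explicit, quadForm_explicit, Matrix.det_fin_two, blf, hsymm]
  ring

lemma blf_self (Y : Matrix (Fin 2) (Fin 2) ℝ) (hsymm : Y 1 0 = Y 0 1) (p : Fin 2 → ℤ) :
    blf Y p p = quadForm Y p := by
  rw [quadForm_explicit, blf, hsymm]; ring

lemma reduction (Y : Matrix (Fin 2) (Fin 2) ℝ) (hsymm : Y 1 0 = Y 0 1)
    (L c : ℝ) (hLpos : 0 < L) (hc : 0 < c)
    (hL : ∀ p : Fin 2 → ℤ, p ≠ 0 → L ≤ quadForm Y p)
    (hcoer : ∀ p : Fin 2 → ℤ, c * ((p 0 : ℝ)^2 + (p 1 : ℝ)^2) ≤ quadForm Y p) :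
    L ≤ m1 Y ∧ m1 Y ≤ m2 Y ∧ m2 Y ≤ 4/3 * Y.det / L := by
  set S1 : Set ℝ := {r : ℝ | ∃ p : Fin 2 → ℤ, p ≠ 0 ∧ quadForm Y p = r} with hS1def
  have he0 : (![1,0] : Fin 2 → ℤ) ≠ 0 := by
    rw [vec_ne_zero_iff]; left; simp
  have hS1ne : S1.Nonempty := ⟨quadForm Y ![1,0], ![1,0], he0, rfl⟩
  have hbdd : BddBelow S1 := ⟨L, by rintro r ⟨p, hp, rfl⟩; exact hL p hp⟩
  have hm1_lb : L ≤ m1 Y := le_csInf hS1ne (by rintro r ⟨p, hp, rfl⟩; exact hL p hp)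
  have hmem_ge : ∀ r ∈ S1, m1 Y ≤ r := fun r hr => csInf_le hbdd hr
  -- existence of a minimizer
  set B0 : ℝ := quadForm Y ![1,0] with hB0def
  set R : ℤ := ⌈B0 / c⌉ with hRdef
  set F : Set (Fin 2 → ℤ) := {p | p ≠ 0 ∧ quadForm Y p ≤ B0} with hFdef
  have hFsub : F ⊆ Set.pi Set.univ (fun _ : Fin 2 => Set.Icc (-R) R) := by
    rintro p ⟨-, hpB⟩ i -
    have h1 : c * ((p 0 : ℝ)^2 + (p 1 : ℝ)^2) ≤ B0 := le_trans (hcoer p) hpB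
    have h2 : ((p i : ℝ))^2 ≤ B0 / c := by
      rw [le_div_iff₀ hc]
      revert i
      rw [Fin.forall_fin_two]
      constructor <;> nlinarith [sq_nonneg ((p 0 : ℝ)), sq_nonneg ((p 1 : ℝ))]
    have h3 : ((p i)^2 : ℝ) ≤ (R : ℝ) := by
      push_cast
      exact le_trans h2 (Int.le_ceil _)
    have h4 : (p i)^2 ≤ R := by exact_mod_cast h3
    have h5 : |p i| ≤ R := le_trans (int_abs_le_sq _) h4
    exact abs_le.mp h5
  have hFfin : F.Finite :=
    Set.Finite.subset (Set.Finite.pi (fun _ => Set.finite_Icc (-R) R)) hFsub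
  have hFne : (![1,0] : Fin 2 → ℤ) ∈ F := ⟨he0, le_refl _⟩
  obtain ⟨p, hpF, hpmin'⟩ := Set.exists_min_image F (quadForm Y) hFfin ⟨_, hFne⟩
  have hpmin : ∀ q : Fin 2 → ℤ, q ≠ 0 → quadForm Y p ≤ quadForm Y q := by
    intro q hq
    by_cases hqF : q ∈ F
    · exact hpmin' q hqF
    · have : ¬ quadForm Y q ≤ B0 := fun h => hqF ⟨hq, h⟩
      exact le_trans hpF.2 (le_of_not_ge this)
  have hm1 : m1 Y = quadForm Y p :=
    le_antisymm (csInf_le hbdd ⟨p, hpF.1, rfl⟩)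
      (le_csInf hS1ne (by rintro r ⟨q, hq, rfl⟩; exact hpmin q hq))
  set μ : ℝ := quadForm Y p with hμdef
  have hμpos : 0 < μ := lt_of_lt_of_le hLpos (hL p hpF.1)
  -- p is primitive
  have hgcd : Int.gcd (p 0) (p 1) = 1 := by
    set g : ℕ := Int.gcd (p 0) (p 1) with hgdef
    have hgne : g ≠ 0 := by
      intro h
      rcases Int.gcd_eq_zero_iff.mp h with ⟨h0, h1⟩
      exact hpF.1 (funext fun i => by fin_cases i <;> simp [h0, h1])
    set p' : Fin 2 → ℤ := ![p 0 / g, p 1 / g] with hp'def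
    have hd0 : (g : ℤ) * (p 0 / g) = p 0 := Int.mul_ediv_cancel' (Int.gcd_dvd_left _ _)
    have hd1 : (g : ℤ) * (p 1 / g) = p 1 := Int.mul_ediv_cancel' (Int.gcd_dvd_right _ _)
    have hp'ne : p' ≠ 0 := by
      rw [vec_ne_zero_iff]
      rcases (vec_ne_zero_iff p).mp hpF.1 with h | h
      · left; intro hcon
        rw [show p' 0 = p 0 / (g:ℤ) from by simp [hp'def]] at hcon
        rw [hcon, mul_zero] at hd0; exact h hd0.symm
      · right; intro hcon
        rw [show p' 1 = p 1 / (g:ℤ) from by simp [hp'def]] at hcon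
        rw [hcon, mul_zero] at hd1; exact h hd1.symm
    have hscale : μ = (g : ℝ)^2 * quadForm Y p' := by
      rw [hμdef, quadForm_explicit, quadForm_explicit]
      have e0 : ((p 0 : ℝ)) = (g : ℝ) * ((p' 0 : ℝ)) := by
        have h' : (g : ℤ) * p' 0 = p 0 := by
          rw [show p' 0 = p 0 / (g:ℤ) from by simp [hp'def]]; exact hd0
        exact_mod_cast h'.symm
      have e1 : ((p 1 : ℝ)) = (g : ℝ) * ((p' 1 : ℝ)) := by
        have h' : (g : ℤ) * p' 1 = p 1 := by
          rw [show p' 1 = p 1 / (g:ℤ) from by simp [hp'def]]; exact hd1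
        exact_mod_cast h'.symm
      rw [e0, e1]; ring
    have hν : μ ≤ quadForm Y p' := hpmin p' hp'ne
    have hg1 : (g : ℝ)^2 ≤ 1 := by nlinarith [hν, hμpos]
    have : g ≤ 1 := by
      by_contra hcon
      push_neg at hcon
      have : (2 : ℝ) ≤ (g : ℝ) := by exact_mod_cast hcon
      nlinarith
    omega
  -- Bezout vector
  set q0 : Fin 2 → ℤ := ![-(Int.gcdB (p 0) (p 1)), Int.gcdA (p 0) (p 1)] with hq0def
  have hdet0 : p 0 * q0 1 - p 1 * q0 0 = 1 := by
    have := Int.gcd_eq_gcd_ab (p 0) (p 1)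
    rw [hgcd] at this
    push_cast at this
    rw [hq0def]
    simp only [Matrix.cons_val_one, Matrix.head_cons, Matrix.cons_val_zero]
    linarith [this]
  set t : ℤ := -round (blf Y p q0 / μ) with htdef
  set q : Fin 2 → ℤ := q0 + t • p with hqdef
  have hqi : ∀ i, (q i : ℝ) = (q0 i : ℝ) + (t : ℝ) * (p i : ℝ) := by
    intro i; rw [hqdef]
    simp only [Pi.add_apply, Pi.smul_apply, smul_eq_mul]
    push_cast
    ring
  have hdetq : (p 0 : ℝ) * (q 1 : ℝ) - (p 1 : ℝ) * (q 0 : ℝ) = 1 := by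
    rw [hqi, hqi]
    have hc0 : ((p 0 : ℝ)) * (q0 1 : ℝ) - ((p 1 : ℝ)) * (q0 0 : ℝ) = 1 := by
      have : ((p 0 * q0 1 - p 1 * q0 0 : ℤ) : ℝ) = ((1 : ℤ) : ℝ) := by rw [hdet0]
      push_cast at this
      linarith [this]
    linear_combination hc0
  have hblfq : blf Y p q = blf Y p q0 + (t : ℝ) * μ := by
    rw [blf, blf, hqi, hqi, hμdef, quadForm_explicit, ← hsymm]
    ring
  have hB : |blf Y p q| ≤ μ / 2 := by
    have h1 : |blf Y p q0 / μ - round (blf Y p q0 / μ)| ≤ 1/2 := abs_sub_round _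
    have h2 : blf Y p q = μ * (blf Y p q0 / μ - round (blf Y p q0 / μ)) := by
      rw [hblfq, htdef]
      field_simp
      push_cast
      ring
    rw [h2, abs_mul, abs_of_pos hμpos]
    calc μ * |blf Y p q0 / μ - round (blf Y p q0 / μ)| ≤ μ * (1/2) := by
          exact mul_le_mul_of_nonneg_left h1 (le_of_lt hμpos)
      _ = μ / 2 := by ring
  have hqne : q ≠ 0 := by
    rw [vec_ne_zero_iff]
    by_contra hcon
    push_neg at hcon
    rw [hcon.1, hcon.2] at hdetq
    simp at hdetq
  have hindep : LinearIndependent ℤ ![p, q] := by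
    rw [LinearIndependent.pair_iff]
    intro s u hsu
    have h0 : s * p 0 + u * q 0 = 0 := by
      have := congrFun hsu 0
      simpa [Pi.add_apply, Pi.smul_apply, smul_eq_mul] using this
    have h1 : s * p 1 + u * q 1 = 0 := by
      have := congrFun hsu 1
      simpa [Pi.add_apply, Pi.smul_apply, smul_eq_mul] using this
    have hdetqz : p 0 * q 1 - p 1 * q 0 = 1 := by
      exact_mod_cast hdetq
    constructor
    · linear_combination q 1 * h0 - q 0 * h1 - s * hdetqz
    · linear_combination p 0 * h1 - p 1 * h0 - u * hdetqz
  -- Gram identity specialised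
  have hGram : μ * quadForm Y q - blf Y p q ^ 2 = Y.det := by
    have := gram_identity Y hsymm p q
    rw [hdetq] at this
    rw [← hμdef] at this
    linarith [this]
  have hq_ge : μ ≤ quadForm Y q := hpmin q hqne
  have hBsq : blf Y p q ^ 2 ≤ μ^2 / 4 := by
    have := abs_le.mp hB
    nlinarith [this.1, this.2]
  have hdet34 : 3/4 * μ^2 ≤ Y.det := by nlinarith [hGram, hq_ge, hBsq, hμpos]
  have hdetpos : 0 < Y.det := by nlinarith [hμpos]
  have hqval : quadForm Y q ≤ 4/3 * Y.det / μ := by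
    rw [le_div_iff₀ hμpos]
    nlinarith [hGram, hBsq, hdet34]
  -- m2 facts
  set S2 : Set ℝ := {r : ℝ | ∃ p' q' : Fin 2 → ℤ, p' ≠ 0 ∧ quadForm Y p' = m1 Y ∧
    LinearIndependent ℤ ![p', q'] ∧ quadForm Y q' = r} with hS2def
  have hS2mem : quadForm Y q ∈ S2 := ⟨p, q, hpF.1, hm1.symm, hindep, rfl⟩
  have hS2sub : ∀ r ∈ S2, r ∈ S1 := by
    rintro r ⟨p', q', -, -, hind, rfl⟩
    exact ⟨q', by simpa using hind.ne_zero 1, rfl⟩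
  have hS2bdd : BddBelow S2 := ⟨L, fun r hr => by
    obtain ⟨q', hq', rfl⟩ := hS2sub r hr
    exact hL q' hq'⟩
  have hm2_eq : m2 Y = sInf S2 := rfl
  have hm1m2 : m1 Y ≤ m2 Y := by
    rw [hm2_eq]
    exact le_csInf ⟨_, hS2mem⟩ (fun r hr => hmem_ge r (hS2sub r hr))
  have hm2_ub : m2 Y ≤ 4/3 * Y.det / L := by
    have h1 : m2 Y ≤ quadForm Y q := csInf_le hS2bdd hS2mem
    have h2 : 4/3 * Y.det / μ ≤ 4/3 * Y.det / L := by
      apply div_le_div_of_nonneg_left (by linarith) hLpos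
      rw [hm1] at hm1_lb
      exact hm1_lb
    linarith [hqval]
  exact ⟨hm1_lb, hm1m2, hm2_ub⟩

lemma three_distinct {α : Type*} [Fintype α] (hcard : Fintype.card α ≤ 2)
    (a b c : α) (hab : a ≠ b) (hac : a ≠ c) (hbc : b ≠ c) : False := by
  classical
  have h1 : ({a, b, c} : Finset α).card ≤ 2 := le_trans (Finset.card_le_univ _) hcard
  rw [Finset.card_insert_of_notMem (by simp [hab, hac]),
    Finset.card_insert_of_notMem (by simp [hbc]), Finset.card_singleton] at h1
  omega

lemma ext_pair {K₀ K : Type*} [Field K₀] [Field K] [CharZero K₀] [Algebra K₀ K]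
    [FiniteDimensional K₀ K] (h2 : Module.finrank K₀ K = 2) (σ : K₀ →+* ℂ)
    (f g h : K →+* ℂ)
    (hf : ∀ x, f (algebraMap K₀ K x) = σ x) (hg : ∀ x, g (algebraMap K₀ K x) = σ x)
    (hh : ∀ x, h (algebraMap K₀ K x) = σ x)
    (hfg : f ≠ g) (hfh : f ≠ h) : g = h := by
  letI : Algebra K₀ ℂ := σ.toAlgebra
  have halg : (algebraMap K₀ ℂ) = σ := rfl
  let F : K →ₐ[K₀] ℂ := ⟨f, by intro x; rw [halg]; exact hf x⟩
  let G : K →ₐ[K₀] ℂ := ⟨g, by intro x; rw [halg]; exact hg x⟩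
  let H : K →ₐ[K₀] ℂ := ⟨h, by intro x; rw [halg]; exact hh x⟩
  have hcard : Fintype.card (K →ₐ[K₀] ℂ) ≤ 2 := by
    rw [AlgHom.card K₀ K ℂ, h2]
  by_contra hgh
  exact three_distinct hcard F G H
    (fun hc => hfg (congrArg AlgHom.toRingHom hc))
    (fun hc => hfh (congrArg AlgHom.toRingHom hc))
    (fun hc => hgh (congrArg AlgHom.toRingHom hc))

lemma four_I_aux (a b : ℝ) : ((a^2 * b^2 : ℝ) : ℂ) =
    ((a : ℝ) : ℂ) * Complex.I * (((b : ℝ) : ℂ) * Complex.I *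
      (-(((a : ℝ) : ℂ) * Complex.I) * -(((b : ℝ) : ℂ) * Complex.I))) := by
  push_cast
  linear_combination ((a:ℂ)^2 * (b:ℂ)^2 * (1 - Complex.I^2)) * Complex.I_sq

lemma amgm_aux (u v s t : ℝ) (hu : 0 ≤ u) (hv : 0 ≤ v) :
    2 * (u * v) * |s * t| ≤ u^2 * s^2 + v^2 * t^2 := by
  rw [abs_mul]
  nlinarith [sq_nonneg (u * |s| - v * |t|), sq_abs s, sq_abs t, abs_nonneg s, abs_nonneg t,
    mul_nonneg hu (abs_nonneg s), mul_nonneg hv (abs_nonneg t)]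

lemma coer_aux (v10 v11 v20 v21 a bb y₁ y₂ : ℝ) (hy₁ : 0 < y₁) (hy₂ : 0 < y₂) :
    min y₁ y₂ * (v10 * v21 - v11 * v20)^2 / (2*(v10^2 + v11^2 + v20^2 + v21^2) + 1)
        * (a^2 + bb^2)
      ≤ y₁ * (a * v10 + bb * v11)^2 + y₂ * (a * v20 + bb * v21)^2 := by
  have hC' : (0:ℝ) < 2*(v10^2+v11^2+v20^2+v21^2)+1 := by positivity
  have hmin : 0 < min y₁ y₂ := lt_min hy₁ hy₂
  set s₁ := a*v10 + bb*v11 with hs₁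
  set s₂ := a*v20 + bb*v21 with hs₂
  have f0 : (v10*v21 - v11*v20)^2 * a^2 = (v21*s₁ - v11*s₂)^2 := by rw [hs₁, hs₂]; ring
  have f1 : (v10*v21 - v11*v20)^2 * bb^2 = (v10*s₂ - v20*s₁)^2 := by rw [hs₁, hs₂]; ring
  have key1 : (v10*v21 - v11*v20)^2 * (a^2+bb^2)
      ≤ (2*(v10^2+v11^2+v20^2+v21^2)+1) * (s₁^2+s₂^2) := by
    nlinarith [f0, f1, sq_nonneg (v21*s₁ + v11*s₂), sq_nonneg (v10*s₂ + v20*s₁),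
      sq_nonneg s₁, sq_nonneg s₂]
  have k2 : min y₁ y₂ * (s₁^2+s₂^2) ≤ y₁*s₁^2 + y₂*s₂^2 := by
    have hm1' := min_le_left y₁ y₂
    have hm2' := min_le_right y₁ y₂
    nlinarith [sq_nonneg s₁, sq_nonneg s₂]
  have k3 : min y₁ y₂ * (v10*v21-v11*v20)^2 / (2*(v10^2+v11^2+v20^2+v21^2)+1) * (a^2+bb^2)
      ≤ min y₁ y₂ * (s₁^2+s₂^2) := by
    rw [div_mul_eq_mul_div, div_le_iff₀ hC']
    nlinarith [key1, hmin.le]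
  exact k3.trans k2


lemma norm_lower_bound (K₀ : Type*) [Field K₀] [NumberField K₀]
    (b : FractionalIdeal (𝓞 K₀)⁰ K₀) (hb : b ≠ 0) (β : K₀) (hβ : β ∈ b) (hβne : β ≠ 0) :
    FractionalIdeal.absNorm b ≤ |Algebra.norm ℚ β| := by
  have hsp : FractionalIdeal.spanSingleton (𝓞 K₀)⁰ β ≤ b := by
    rw [FractionalIdeal.spanSingleton_le_iff_mem]; exact hβ
  set J : FractionalIdeal (𝓞 K₀)⁰ K₀ := b⁻¹ * FractionalIdeal.spanSingleton (𝓞 K₀)⁰ β with hJ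
  have hJ1 : J ≤ 1 := by
    calc J ≤ b⁻¹ * b := mul_le_mul_right hsp _
    _ = 1 := by rw [mul_comm]; exact mul_inv_cancel₀ hb
  have hJne : J ≠ 0 := by
    apply mul_ne_zero
    · exact inv_ne_zero hb
    · rw [ne_eq, FractionalIdeal.spanSingleton_eq_zero_iff]; exact hβne
  obtain ⟨I, hI⟩ := FractionalIdeal.le_one_iff_exists_coeIdeal.mp hJ1
  have hIne : I ≠ ⊥ := by
    intro h; rw [h] at hI; simp at hI; exact hJne hI.symm
  have hJnorm : 1 ≤ FractionalIdeal.absNorm J := by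
    rw [← hI, FractionalIdeal.coeIdeal_absNorm]
    have : 1 ≤ Ideal.absNorm I := by
      rcases Nat.eq_zero_or_pos (Ideal.absNorm I) with h0 | h1
      · exact absurd (Ideal.absNorm_eq_zero_iff.mp h0) hIne
      · exact h1
    exact_mod_cast this
  have hmul : b * J = FractionalIdeal.spanSingleton (𝓞 K₀)⁰ β := by
    rw [hJ, ← mul_assoc, mul_inv_cancel₀ hb, one_mul]
  have h1 : FractionalIdeal.absNorm (b * J) = |Algebra.norm ℚ β| := by
    rw [hmul, FractionalIdeal.absNorm_span_singleton]
  rw [_root_.map_mul FractionalIdeal.absNorm b J] at h1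
  have hbnn : 0 ≤ FractionalIdeal.absNorm b := FractionalIdeal.absNorm_nonneg b
  nlinarith [hJnorm, hbnn]

lemma norm_eq_prod_embeddings_complex (K : Type*) [Field K] [NumberField K] (x : K) :
    ((Algebra.norm ℚ x : ℚ) : ℂ) = ∏ φ : K →+* ℂ, φ x := by
  have h := Algebra.norm_eq_prod_embeddings ℚ ℂ (L := K) x
  rw [show (algebraMap ℚ ℂ) (Algebra.norm ℚ x) = ((Algebra.norm ℚ x : ℚ) : ℂ) by
    simp [eq_ratCast]] at h
  rw [h]
  exact (Fintype.prod_equiv (RingHom.equivRatAlgHom K ℂ) _ _ (fun f => by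
    simp [RingHom.equivRatAlgHom_apply])).symm

/-- Let `K` be a primitive quartic CM field, `δ ∈ K₀` with `δ² = Δ₀`,
`b` a fractional `𝓞 K₀`-ideal with ℤ-basis `b₁, b₂` satisfying
`b₁b₂ᶜ − b₂b₁ᶜ = N(b)·δ`, and `z ∈ K \ K₀` such that `z·b + b⁻¹` is a fractional
`𝓞 K`-ideal.  Let `φ₁ ≠ φ₂` be the two embeddings `K → ℂ` with `Im φ(zδ⁻¹) > 0`, and let
`Z` be the symmetric matrix with entries `Z_{jk} = φ₁(zδ⁻¹b_jb_k) + φ₂(zδ⁻¹b_jb_k)`,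
`Y = Im Z`.  Then `Y` is positive definite, `det Y = I(z)·N(b)²`, and
`(2/√Δ₀)·N(b)·I(z)^{1/2} ≤ m₁(Y) ≤ m₂(Y) ≤ (2√Δ₀/3)·N(b)·I(z)^{1/2}`,
where `I(z) = |N_{K/ℚ}((z − z̄)/2)|^{1/2}`. -/
theorem stmt_10
    (K₀ K : Type*) [Field K₀] [Field K] [NumberField K₀] [NumberField K] [Algebra K₀ K]
    (hdegK : Module.finrank ℚ K = 4)
    (hdegK₀ : Module.finrank ℚ K₀ = 2)
    (hquad : Module.finrank K₀ K = 2)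
    (htotreal : ∀ φ : K₀ →+* ℂ, ∀ x : K₀, (φ x).im = 0)
    (htotimag : ∀ φ : K →+* ℂ, ∃ x : K, (φ x).im ≠ 0)
    (hprim : ∀ F : Subfield K, Module.finrank ℚ F = 2 →
      ∃ φ : F →+* ℂ, ∀ x : F, (φ x).im = 0)
    (conj : K ≃ₐ[K₀] K) (hconj : ∃ x : K, conj x ≠ x)
    -- δ ∈ K₀ is a square root of the discriminant Δ₀ of K₀
    (δ : K₀) (hδ : δ ^ 2 = (NumberField.discr K₀ : K₀))
    -- c is the nontrivial automorphism of K₀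
    (c : K₀ ≃ₐ[ℚ] K₀) (hc : ∃ x : K₀, c x ≠ x)
    -- b is a fractional 𝓞 K₀-ideal with ℤ-basis b₁, b₂
    (b : FractionalIdeal (𝓞 K₀)⁰ K₀) (hb : b ≠ 0)
    (bv : Fin 2 → K₀)
    (hbv_indep : LinearIndependent ℤ bv)
    (hbv_span : ∀ x : K₀, x ∈ b ↔ x ∈ Submodule.span ℤ (Set.range bv))
    -- b₁b₂ᶜ − b₂b₁ᶜ = N(b)·δ
    (hbasis : bv 0 * c (bv 1) - bv 1 * c (bv 0) = ((FractionalIdeal.absNorm b : ℚ) : K₀) * δ)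
    -- z ∈ K, z ∉ K₀, and z·b + b⁻¹ is a fractional 𝓞 K-ideal (an 𝓞 K-submodule of K)
    (z : K) (hz : z ∉ Set.range (algebraMap K₀ K))
    (hmod : ∀ r : 𝓞 K, ∀ x ∈ b, ∀ y ∈ (b⁻¹ : FractionalIdeal (𝓞 K₀)⁰ K₀),
      ∃ x' ∈ b, ∃ y' ∈ (b⁻¹ : FractionalIdeal (𝓞 K₀)⁰ K₀),
        algebraMap (𝓞 K) K r * (z * algebraMap K₀ K x + algebraMap K₀ K y) =
          z * algebraMap K₀ K x' + algebraMap K₀ K y')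
    -- the two embeddings with Im φ(zδ⁻¹) > 0, one from each complex-conjugate pair
    (φ₁ φ₂ : K →+* ℂ) (hφne : φ₁ ≠ φ₂)
    (hφ₁ : 0 < (φ₁ (z * (algebraMap K₀ K δ)⁻¹)).im)
    (hφ₂ : 0 < (φ₂ (z * (algebraMap K₀ K δ)⁻¹)).im)
    -- the period matrix Z
    (Z : Matrix (Fin 2) (Fin 2) ℂ)
    (hZ : ∀ j k, Z j k =
      φ₁ (z * (algebraMap K₀ K δ)⁻¹ * algebraMap K₀ K (bv j) * algebraMap K₀ K (bv k)) +
      φ₂ (z * (algebraMap K₀ K δ)⁻¹ * algebraMap K₀ K (bv j) * algebraMap K₀ K (bv k))) :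
    (Z.map Complex.im).PosDef ∧
    (Z.map Complex.im).det =
      Real.sqrt |((Algebra.norm ℚ ((z - conj z) / 2) : ℚ) : ℝ)| *
        ((FractionalIdeal.absNorm b : ℚ) : ℝ) ^ 2 ∧
    2 / Real.sqrt (NumberField.discr K₀ : ℝ) * ((FractionalIdeal.absNorm b : ℚ) : ℝ) *
        Real.sqrt (Real.sqrt |((Algebra.norm ℚ ((z - conj z) / 2) : ℚ) : ℝ)|) ≤
      m1 (Z.map Complex.im) ∧
    m1 (Z.map Complex.im) ≤ m2 (Z.map Complex.im) ∧
    m2 (Z.map Complex.im) ≤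
      2 * Real.sqrt (NumberField.discr K₀ : ℝ) / 3 * ((FractionalIdeal.absNorm b : ℚ) : ℝ) *
        Real.sqrt (Real.sqrt |((Algebra.norm ℚ ((z - conj z) / 2) : ℚ) : ℝ)|) := by
  classical
  haveI hFD : FiniteDimensional K₀ K := FiniteDimensional.right ℚ K₀ K
  set w : K := z * (algebraMap K₀ K δ)⁻¹ with hw
  set Y : Matrix (Fin 2) (Fin 2) ℝ := Z.map Complex.im with hYdef
  set σ₁ : K₀ →+* ℂ := φ₁.comp (algebraMap K₀ K) with hσ₁def
  set σ₂ : K₀ →+* ℂ := φ₂.comp (algebraMap K₀ K) with hσ₂def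
  set ψ₁ : K →+* ℂ := (starRingEnd ℂ).comp φ₁ with hψ₁def
  set ψ₂ : K →+* ℂ := (starRingEnd ℂ).comp φ₂ with hψ₂def
  have hσ₁x : ∀ x : K₀, φ₁ (algebraMap K₀ K x) = (((σ₁ x).re : ℝ) : ℂ) := by
    intro x
    have : σ₁ x = (((σ₁ x).re : ℝ) : ℂ) := Complex.ext rfl (by simp [htotreal σ₁ x])
    exact this
  have hσ₂x : ∀ x : K₀, φ₂ (algebraMap K₀ K x) = (((σ₂ x).re : ℝ) : ℂ) := by
    intro x
    have : σ₂ x = (((σ₂ x).re : ℝ) : ℂ) := Complex.ext rfl (by simp [htotreal σ₂ x])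
    exact this
  -- the conjugation automorphism corresponds to complex conjugation
  have hconj_emb : ∀ (φ : K →+* ℂ), (∀ x, φ (algebraMap K₀ K x) =
      (φ.comp (algebraMap K₀ K)) x) → ∀ x : K, φ (conj x) = (starRingEnd ℂ) (φ x) := by
    intro φ _
    set σ : K₀ →+* ℂ := φ.comp (algebraMap K₀ K)
    have hg : ∀ x, (φ.comp conj.toAlgHom.toRingHom) (algebraMap K₀ K x) = σ x := by
      intro x
      simp only [RingHom.comp_apply, AlgHom.toRingHom_eq_coe, RingHom.coe_coe,
        AlgHom.coe_coe]
      rw [show (conj.toAlgHom : K →ₐ[K₀] K) (algebraMap K₀ K x) = algebraMap K₀ K x from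
        conj.toAlgHom.commutes x]
      rfl
    have hh : ∀ x, ((starRingEnd ℂ).comp φ) (algebraMap K₀ K x) = σ x := by
      intro x
      simp only [RingHom.comp_apply]
      exact Complex.conj_eq_iff_im.mpr (htotreal σ x)
    have hfg : φ ≠ φ.comp conj.toAlgHom.toRingHom := by
      intro hEq
      obtain ⟨x, hx⟩ := hconj
      have := RingHom.congr_fun hEq x
      simp only [RingHom.comp_apply, AlgHom.toRingHom_eq_coe, RingHom.coe_coe,
        AlgHom.coe_coe] at this
      exact hx (φ.injective this.symm)
    have hfh : φ ≠ (starRingEnd ℂ).comp φ := by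
      intro hEq
      obtain ⟨x, hx⟩ := htotimag φ
      have := RingHom.congr_fun hEq x
      simp only [RingHom.comp_apply] at this
      have him := congrArg Complex.im this
      simp [Complex.conj_im] at him
      exact hx (by linarith)
    have := ext_pair hquad σ φ (φ.comp conj.toAlgHom.toRingHom) ((starRingEnd ℂ).comp φ)
      (fun x => rfl) hg hh hfg hfh
    intro x
    have := RingHom.congr_fun this x
    simpa using this
  have hconj₁ : ∀ x : K, φ₁ (conj x) = (starRingEnd ℂ) (φ₁ x) :=
    hconj_emb φ₁ (fun _ => rfl)
  have hconj₂ : ∀ x : K, φ₂ (conj x) = (starRingEnd ℂ) (φ₂ x) :=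
    hconj_emb φ₂ (fun _ => rfl)
  -- the restrictions to K₀ are distinct
  have hψ₁ne : φ₁ ≠ ψ₁ := by
    intro hEq
    obtain ⟨x, hx⟩ := htotimag φ₁
    have := RingHom.congr_fun hEq x
    rw [hψ₁def] at this
    simp only [RingHom.comp_apply] at this
    have him := congrArg Complex.im this
    simp [Complex.conj_im] at him
    exact hx (by linarith)
  have hσne : σ₁ ≠ σ₂ := by
    intro hEq
    have h := ext_pair hquad σ₁ φ₁ φ₂ ψ₁
      (fun x => rfl) (fun x => by rw [hEq]; rfl)
      (fun x => by
        rw [hψ₁def]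
        simp only [RingHom.comp_apply]
        exact Complex.conj_eq_iff_im.mpr (htotreal σ₁ x))
      hφne hψ₁ne
    have him : (φ₂ w).im = -(φ₁ w).im := by
      rw [h, hψ₁def]; simp
    linarith [hφ₁, hφ₂]
  -- σ₂ = σ₁ ∘ c
  have hcard₀ : Fintype.card (K₀ →+* ℂ) ≤ 2 := by
    rw [NumberField.Embeddings.card K₀ ℂ, hdegK₀]
  have hσc : σ₁.comp c.toAlgHom.toRingHom = σ₂ := by
    by_contra hne
    have hab : σ₁ ≠ σ₁.comp c.toAlgHom.toRingHom := by
      intro hEq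
      obtain ⟨x, hx⟩ := hc
      have := RingHom.congr_fun hEq x
      simp only [RingHom.comp_apply, AlgHom.toRingHom_eq_coe, RingHom.coe_coe,
        AlgHom.coe_coe] at this
      rw [hσ₁def] at this
      simp only [RingHom.comp_apply] at this
      exact hx ((algebraMap K₀ K).injective (φ₁.injective this.symm)).symm.symm
    exact three_distinct hcard₀ σ₁ (σ₁.comp c.toAlgHom.toRingHom) σ₂ hab hσne hne
  have hσcx : ∀ x : K₀, σ₁ (c x) = σ₂ x := by
    intro x
    have := RingHom.congr_fun hσc x
    simpa using this
  -- the four embeddings of K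
  have hψ₂ne : φ₂ ≠ ψ₂ := by
    intro hEq
    obtain ⟨x, hx⟩ := htotimag φ₂
    have := RingHom.congr_fun hEq x
    rw [hψ₂def] at this
    simp only [RingHom.comp_apply] at this
    have him := congrArg Complex.im this
    simp [Complex.conj_im] at him
    exact hx (by linarith)
  have h12' : φ₁ ≠ ψ₂ := by
    intro hEq
    have him : (φ₁ w).im = -(φ₂ w).im := by rw [hEq, hψ₂def]; simp
    linarith [hφ₁, hφ₂]
  have h21' : φ₂ ≠ ψ₁ := by
    intro hEq
    have him : (φ₂ w).im = -(φ₁ w).im := by rw [hEq, hψ₁def]; simp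
    linarith [hφ₁, hφ₂]
  have hψψ : ψ₁ ≠ ψ₂ := by
    intro hEq
    apply hφne
    ext x
    have h := RingHom.congr_fun hEq x
    rw [hψ₁def, hψ₂def] at h
    simp only [RingHom.comp_apply] at h
    exact (starRingEnd ℂ).injective h
  have hcardK : Fintype.card (K →+* ℂ) = 4 := by
    rw [NumberField.Embeddings.card K ℂ, hdegK]
  have huniv : (Finset.univ : Finset (K →+* ℂ)) = {φ₁, φ₂, ψ₁, ψ₂} := by
    symm
    apply Finset.eq_univ_of_card
    rw [hcardK, Finset.card_insert_of_notMem (by simp [hφne, hψ₁ne, h12']),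
      Finset.card_insert_of_notMem (by simp [h21', hψ₂ne]),
      Finset.card_insert_of_notMem (by simp [hψψ]), Finset.card_singleton]
  have hprodK : ∀ x : K, ((Algebra.norm ℚ x : ℚ) : ℂ) = φ₁ x * (φ₂ x * (ψ₁ x * ψ₂ x)) := by
    intro x
    rw [norm_eq_prod_embeddings_complex, show (Finset.univ : Finset (K →+* ℂ)).prod
        (fun φ => φ x) = ({φ₁, φ₂, ψ₁, ψ₂} : Finset (K →+* ℂ)).prod (fun φ => φ x) from by
      rw [huniv]]
    rw [Finset.prod_insert (by simp [hφne, hψ₁ne, h12']),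
      Finset.prod_insert (by simp [h21', hψ₂ne]),
      Finset.prod_insert (by simp [hψψ]), Finset.prod_singleton]
  -- the two embeddings of K₀
  have huniv₀ : (Finset.univ : Finset (K₀ →+* ℂ)) = {σ₁, σ₂} := by
    symm
    apply Finset.eq_univ_of_card
    rw [NumberField.Embeddings.card K₀ ℂ, hdegK₀,
      Finset.card_insert_of_notMem (by simp [hσne]), Finset.card_singleton]
  have hprodK₀ : ∀ x : K₀, ((Algebra.norm ℚ x : ℚ) : ℂ) = σ₁ x * σ₂ x := by
    intro x
    rw [norm_eq_prod_embeddings_complex, show (Finset.univ : Finset (K₀ →+* ℂ)).prod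
        (fun φ => φ x) = ({σ₁, σ₂} : Finset (K₀ →+* ℂ)).prod (fun φ => φ x) from by
      rw [huniv₀]]
    rw [Finset.prod_insert (by simp [hσne]), Finset.prod_singleton]
  -- numeric data
  set y₁ : ℝ := (φ₁ w).im with hy₁def
  set y₂ : ℝ := (φ₂ w).im with hy₂def
  set Δr : ℝ := ((NumberField.discr K₀ : ℤ) : ℝ) with hΔrdef
  set Nb : ℝ := ((FractionalIdeal.absNorm b : ℚ) : ℝ) with hNbdef
  set r₁ : ℝ := (σ₁ δ).re with hr₁def
  set r₂ : ℝ := (σ₂ δ).re with hr₂def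
  have hΔne : ((NumberField.discr K₀ : ℤ) : K₀) ≠ 0 := by
    simpa using (Int.cast_ne_zero (α := K₀)).mpr (NumberField.discr_ne_zero K₀)
  have hδne : δ ≠ 0 := by
    intro h
    rw [h] at hδ
    simp at hδ
    exact hΔne hδ.symm
  have hδKne : (algebraMap K₀ K δ) ≠ 0 := by
    simpa using (map_ne_zero (algebraMap K₀ K)).mpr hδne
  have hzw : z = w * algebraMap K₀ K δ := by
    rw [hw]
    field_simp
  have hσδ₁ : σ₁ δ = ((r₁ : ℝ) : ℂ) := Complex.ext rfl (by simp [htotreal σ₁ δ])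
  have hσδ₂ : σ₂ δ = ((r₂ : ℝ) : ℂ) := Complex.ext rfl (by simp [htotreal σ₂ δ])
  have hr₁sq : r₁ ^ 2 = Δr := by
    have h1 : σ₁ (δ ^ 2) = ((NumberField.discr K₀ : ℤ) : ℂ) := by
      rw [hδ]
      push_cast
      exact map_intCast σ₁ _
    rw [map_pow, hσδ₁] at h1
    have h2 : ((r₁ ^ 2 : ℝ) : ℂ) = ((Δr : ℝ) : ℂ) := by
      push_cast
      rw [hΔrdef]
      push_cast
      exact_mod_cast h1
    exact_mod_cast h2
  have hr₂sq : r₂ ^ 2 = Δr := by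
    have h1 : σ₂ (δ ^ 2) = ((NumberField.discr K₀ : ℤ) : ℂ) := by
      rw [hδ]
      push_cast
      exact map_intCast σ₂ _
    rw [map_pow, hσδ₂] at h1
    have h2 : ((r₂ ^ 2 : ℝ) : ℂ) = ((Δr : ℝ) : ℂ) := by
      push_cast
      rw [hΔrdef]
      push_cast
      exact_mod_cast h1
    exact_mod_cast h2
  have hr₁ne : r₁ ≠ 0 := by
    intro h
    apply hδne
    apply σ₁.injective
    rw [hσδ₁, h]
    simp
  have hΔpos : 0 < Δr := by
    rw [← hr₁sq]
    positivity
  have hNbpos : 0 < Nb := by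
    rw [hNbdef]
    have h1 : FractionalIdeal.absNorm b ≠ 0 := by
      rw [ne_eq, FractionalIdeal.absNorm_eq_zero_iff]; exact hb
    have h2 : 0 ≤ FractionalIdeal.absNorm b := FractionalIdeal.absNorm_nonneg b
    have : (0 : ℚ) < FractionalIdeal.absNorm b := lt_of_le_of_ne h2 (Ne.symm h1)
    exact_mod_cast this
  -- entries of Y
  have hY : ∀ j k, Y j k = y₁ * ((σ₁ (bv j)).re * (σ₁ (bv k)).re)
      + y₂ * ((σ₂ (bv j)).re * (σ₂ (bv k)).re) := by
    intro j k
    rw [hYdef, Matrix.map_apply, hZ j k]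
    rw [_root_.map_mul φ₁, _root_.map_mul φ₁, _root_.map_mul φ₂, _root_.map_mul φ₂,
      hσ₁x, hσ₁x, hσ₂x, hσ₂x]
    simp [Complex.add_im, Complex.mul_im, Complex.ofReal_re, Complex.ofReal_im]
    ring
  -- the determinant relation for the basis
  have hob₁ : ∀ j, σ₁ (bv j) = (((σ₁ (bv j)).re : ℝ) : ℂ) :=
    fun j => Complex.ext rfl (by simp [htotreal σ₁ _])
  have hob₂ : ∀ j, σ₂ (bv j) = (((σ₂ (bv j)).re : ℝ) : ℂ) :=
    fun j => Complex.ext rfl (by simp [htotreal σ₂ _])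
  have hdM : (σ₁ (bv 0)).re * (σ₂ (bv 1)).re - (σ₁ (bv 1)).re * (σ₂ (bv 0)).re = Nb * r₁ := by
    have h1 := congrArg σ₁ hbasis
    rw [map_sub, _root_.map_mul σ₁, _root_.map_mul σ₁, hσcx (bv 1), hσcx (bv 0),
      _root_.map_mul σ₁, map_ratCast, hσδ₁, hob₁ 0, hob₁ 1, hob₂ 0, hob₂ 1] at h1
    have h2 : (((σ₁ (bv 0)).re * (σ₂ (bv 1)).re - (σ₁ (bv 1)).re * (σ₂ (bv 0)).re : ℝ) : ℂ)
        = ((Nb * r₁ : ℝ) : ℂ) := by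
      push_cast
      push_cast at h1
      rw [hNbdef]
      push_cast
      exact h1
    exact_mod_cast h2
  have hdMne : (σ₁ (bv 0)).re * (σ₂ (bv 1)).re - (σ₁ (bv 1)).re * (σ₂ (bv 0)).re ≠ 0 := by
    rw [hdM]
    exact mul_ne_zero hNbpos.ne' hr₁ne
  -- determinant of Y
  have hdY : Y.det = y₁ * y₂ * Δr * Nb ^ 2 := by
    rw [Matrix.det_fin_two, hY 0 0, hY 0 1, hY 1 0, hY 1 1]
    have hdMsq : ((σ₁ (bv 0)).re * (σ₂ (bv 1)).re - (σ₁ (bv 1)).re * (σ₂ (bv 0)).re) ^ 2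
        = Nb ^ 2 * Δr := by
      rw [hdM, mul_pow, hr₁sq]
    linear_combination (y₁ * y₂) * hdMsq
  -- computation of I(z)
  have hφδ₁ : φ₁ (algebraMap K₀ K δ) = ((r₁ : ℝ) : ℂ) := by rw [hσ₁x δ]
  have hφδ₂ : φ₂ (algebraMap K₀ K δ) = ((r₂ : ℝ) : ℂ) := by rw [hσ₂x δ]
  have hφz₁ : (φ₁ z).im = y₁ * r₁ := by
    rw [hzw, _root_.map_mul φ₁, hφδ₁]
    simp [Complex.mul_im, hy₁def]
  have hφz₂ : (φ₂ z).im = y₂ * r₂ := by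
    rw [hzw, _root_.map_mul φ₂, hφδ₂]
    simp [Complex.mul_im, hy₂def]
  have hα₁ : φ₁ ((z - conj z) / 2) = ((y₁ * r₁ : ℝ) : ℂ) * Complex.I := by
    rw [map_div₀, map_sub, hconj₁, Complex.sub_conj, hφz₁]
    have h2 : φ₁ (2 : K) = 2 := by
      rw [show (2 : K) = ((2 : ℚ) : K) by push_cast; ring, map_ratCast]
      norm_num
    rw [h2]
    push_cast
    ring
  have hα₂ : φ₂ ((z - conj z) / 2) = ((y₂ * r₂ : ℝ) : ℂ) * Complex.I := by
    rw [map_div₀, map_sub, hconj₂, Complex.sub_conj, hφz₂]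
    have h2 : φ₂ (2 : K) = 2 := by
      rw [show (2 : K) = ((2 : ℚ) : K) by push_cast; ring, map_ratCast]
      norm_num
    rw [h2]
    push_cast
    ring
  have hαψ₁ : ψ₁ ((z - conj z) / 2) = -(((y₁ * r₁ : ℝ) : ℂ) * Complex.I) := by
    rw [hψ₁def]
    simp only [RingHom.comp_apply]
    rw [hα₁]
    simp [Complex.conj_I]
  have hαψ₂ : ψ₂ ((z - conj z) / 2) = -(((y₂ * r₂ : ℝ) : ℂ) * Complex.I) := by
    rw [hψ₂def]
    simp only [RingHom.comp_apply]
    rw [hα₂]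
    simp [Complex.conj_I]
  have hNα : ((Algebra.norm ℚ ((z - conj z) / 2) : ℚ) : ℝ) = (y₁ * r₁) ^ 2 * (y₂ * r₂) ^ 2 := by
    have h1 := hprodK ((z - conj z) / 2)
    rw [hα₁, hα₂, hαψ₁, hαψ₂] at h1
    rw [← four_I_aux (y₁ * r₁) (y₂ * r₂)] at h1
    exact_mod_cast h1
  have habs : |((Algebra.norm ℚ ((z - conj z) / 2) : ℚ) : ℝ)|
      = (y₁ * r₁) ^ 2 * (y₂ * r₂) ^ 2 := by
    rw [hNα]
    exact abs_of_nonneg (by positivity)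
  have hsqrtN : Real.sqrt |((Algebra.norm ℚ ((z - conj z) / 2) : ℚ) : ℝ)| = y₁ * y₂ * Δr := by
    rw [habs]
    have hrr : (r₁ * r₂) ^ 2 = Δr ^ 2 := by
      rw [mul_pow, hr₁sq, hr₂sq]
      ring
    have h1 : (y₁ * r₁) ^ 2 * (y₂ * r₂) ^ 2 = (y₁ * y₂ * Δr) ^ 2 := by
      linear_combination (y₁ ^ 2 * y₂ ^ 2) * hrr
    rw [h1, Real.sqrt_sq (by positivity)]
  -- symmetry of Y
  have hsymmY : Y 1 0 = Y 0 1 := by rw [hY, hY]; ring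
  -- the quadratic form explicitly
  have hqf : ∀ p : Fin 2 → ℤ, quadForm Y p =
      y₁ * ((p 0 : ℝ) * (σ₁ (bv 0)).re + (p 1 : ℝ) * (σ₁ (bv 1)).re) ^ 2
      + y₂ * ((p 0 : ℝ) * (σ₂ (bv 0)).re + (p 1 : ℝ) * (σ₂ (bv 1)).re) ^ 2 := by
    intro p
    rw [quadForm_explicit, hY 0 0, hY 0 1, hY 1 0, hY 1 1]
    ring
  -- positive definiteness
  have hPD : Y.PosDef := by
    rw [Matrix.posDef_iff_dotProduct_mulVec]
    constructor
    · ext i j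
      rw [Matrix.conjTranspose_apply, hY i j, hY j i]
      simp only [star_trivial]
      ring
    · intro x hx
      have hval : star x ⬝ᵥ Y.mulVec x =
          y₁ * ((σ₁ (bv 0)).re * x 0 + (σ₁ (bv 1)).re * x 1) ^ 2
          + y₂ * ((σ₂ (bv 0)).re * x 0 + (σ₂ (bv 1)).re * x 1) ^ 2 := by
        simp [dotProduct, Matrix.mulVec, Fin.sum_univ_two, hY]
        ring
      rw [hval]
      set s₁ : ℝ := (σ₁ (bv 0)).re * x 0 + (σ₁ (bv 1)).re * x 1 with hs₁
      set s₂ : ℝ := (σ₂ (bv 0)).re * x 0 + (σ₂ (bv 1)).re * x 1 with hs₂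
      have hxs : s₁ ≠ 0 ∨ s₂ ≠ 0 := by
        by_contra hcon
        push_neg at hcon
        apply hx
        have e0 : ((σ₁ (bv 0)).re * (σ₂ (bv 1)).re - (σ₁ (bv 1)).re * (σ₂ (bv 0)).re) * x 0
            = (σ₂ (bv 1)).re * s₁ - (σ₁ (bv 1)).re * s₂ := by rw [hs₁, hs₂]; ring
        have e1 : ((σ₁ (bv 0)).re * (σ₂ (bv 1)).re - (σ₁ (bv 1)).re * (σ₂ (bv 0)).re) * x 1
            = (σ₁ (bv 0)).re * s₂ - (σ₂ (bv 0)).re * s₁ := by rw [hs₁, hs₂]; ring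
        have e0' : ((σ₁ (bv 0)).re * (σ₂ (bv 1)).re - (σ₁ (bv 1)).re * (σ₂ (bv 0)).re) * x 0
            = 0 := by rw [e0, hcon.1, hcon.2]; ring
        have e1' : ((σ₁ (bv 0)).re * (σ₂ (bv 1)).re - (σ₁ (bv 1)).re * (σ₂ (bv 0)).re) * x 1
            = 0 := by rw [e1, hcon.1, hcon.2]; ring
        funext i
        fin_cases i
        · simpa using (mul_eq_zero.mp e0').resolve_left hdMne
        · simpa using (mul_eq_zero.mp e1').resolve_left hdMne
      rcases hxs with h | h
      · have h1 : 0 < s₁ ^ 2 := lt_of_le_of_ne (sq_nonneg _) (Ne.symm (pow_ne_zero 2 h))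
        have h2 : 0 < y₁ * s₁ ^ 2 := mul_pos hφ₁ h1
        have h3 : 0 ≤ y₂ * s₂ ^ 2 := mul_nonneg hφ₂.le (sq_nonneg _)
        linarith
      · have h1 : 0 < s₂ ^ 2 := lt_of_le_of_ne (sq_nonneg _) (Ne.symm (pow_ne_zero 2 h))
        have h2 : 0 < y₂ * s₂ ^ 2 := mul_pos hφ₂ h1
        have h3 : 0 ≤ y₁ * s₁ ^ 2 := mul_nonneg hφ₁.le (sq_nonneg _)
        linarith
  -- the lower bound for the quadratic form
  have hsqy : 0 < Real.sqrt (y₁ * y₂) := Real.sqrt_pos.mpr (by positivity)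
  have hLpos : 0 < 2 * Real.sqrt (y₁ * y₂) * Nb := by positivity
  have hL : ∀ p : Fin 2 → ℤ, p ≠ 0 → 2 * Real.sqrt (y₁ * y₂) * Nb ≤ quadForm Y p := by
    intro p hp
    set β : K₀ := p 0 • bv 0 + p 1 • bv 1 with hβ
    have hβb : β ∈ b := by
      rw [hbv_span]
      exact Submodule.add_mem _
        (Submodule.smul_mem _ _ (Submodule.subset_span ⟨0, rfl⟩))
        (Submodule.smul_mem _ _ (Submodule.subset_span ⟨1, rfl⟩))
    have hβne : β ≠ 0 := by
      intro h
      apply hp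
      have hli := Fintype.linearIndependent_iff.mp hbv_indep (fun i => p i) (by
        rw [Fin.sum_univ_two]
        exact h)
      funext i
      exact hli i
    set s₁ : ℝ := (p 0 : ℝ) * (σ₁ (bv 0)).re + (p 1 : ℝ) * (σ₁ (bv 1)).re with hs₁
    set s₂ : ℝ := (p 0 : ℝ) * (σ₂ (bv 0)).re + (p 1 : ℝ) * (σ₂ (bv 1)).re with hs₂
    have hσβ₁ : σ₁ β = ((s₁ : ℝ) : ℂ) := by
      rw [hβ, map_add, map_zsmul, map_zsmul, hob₁ 0, hob₁ 1, hs₁]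
      simp only [zsmul_eq_mul]
      push_cast
      ring
    have hσβ₂ : σ₂ β = ((s₂ : ℝ) : ℂ) := by
      rw [hβ, map_add, map_zsmul, map_zsmul, hob₂ 0, hob₂ 1, hs₂]
      simp only [zsmul_eq_mul]
      push_cast
      ring
    have hNβ : ((Algebra.norm ℚ β : ℚ) : ℝ) = s₁ * s₂ := by
      have h1 := hprodK₀ β
      rw [hσβ₁, hσβ₂] at h1
      exact_mod_cast h1
    have hge : Nb ≤ |s₁ * s₂| := by
      have h1 := norm_lower_bound K₀ b hb β hβb hβne
      have h2 : ((FractionalIdeal.absNorm b : ℚ) : ℝ) ≤ ((|Algebra.norm ℚ β| : ℚ) : ℝ) := by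
        exact_mod_cast h1
      rw [hNbdef]
      calc ((FractionalIdeal.absNorm b : ℚ) : ℝ) ≤ ((|Algebra.norm ℚ β| : ℚ) : ℝ) := h2
        _ = |((Algebra.norm ℚ β : ℚ) : ℝ)| := by push_cast; rfl
        _ = |s₁ * s₂| := by rw [hNβ]
    rw [hqf p, ← hs₁, ← hs₂]
    have h1 : Real.sqrt y₁ * Real.sqrt y₂ = Real.sqrt (y₁ * y₂) := (Real.sqrt_mul hφ₁.le _).symm
    have h2 : Real.sqrt y₁ ^ 2 = y₁ := Real.sq_sqrt hφ₁.le
    have h2' : Real.sqrt y₂ ^ 2 = y₂ := Real.sq_sqrt hφ₂.le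
    have key : 2 * Real.sqrt (y₁ * y₂) * |s₁ * s₂| ≤ y₁ * s₁ ^ 2 + y₂ * s₂ ^ 2 := by
      have hA := amgm_aux (Real.sqrt y₁) (Real.sqrt y₂) s₁ s₂
        (Real.sqrt_nonneg y₁) (Real.sqrt_nonneg y₂)
      rw [h2, h2', h1] at hA
      exact hA
    have h3 : 2 * Real.sqrt (y₁ * y₂) * Nb ≤ 2 * Real.sqrt (y₁ * y₂) * |s₁ * s₂| :=
      mul_le_mul_of_nonneg_left hge (by positivity)
    linarith
  -- coercivity
  have hminpos : 0 < min y₁ y₂ := lt_min hφ₁ hφ₂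
  have hdMsqpos : 0 < ((σ₁ (bv 0)).re * (σ₂ (bv 1)).re
      - (σ₁ (bv 1)).re * (σ₂ (bv 0)).re) ^ 2 :=
    lt_of_le_of_ne (sq_nonneg _) (Ne.symm (pow_ne_zero 2 hdMne))
  have hccpos : 0 < min y₁ y₂ * ((σ₁ (bv 0)).re * (σ₂ (bv 1)).re
      - (σ₁ (bv 1)).re * (σ₂ (bv 0)).re) ^ 2 / (2 * ((σ₁ (bv 0)).re ^ 2 + (σ₁ (bv 1)).re ^ 2
      + (σ₂ (bv 0)).re ^ 2 + (σ₂ (bv 1)).re ^ 2) + 1) := by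
    apply div_pos (mul_pos hminpos hdMsqpos)
    have g0 : (0:ℝ) ≤ (σ₁ (bv 0)).re ^ 2 := sq_nonneg _
    have g1 : (0:ℝ) ≤ (σ₁ (bv 1)).re ^ 2 := sq_nonneg _
    have g2 : (0:ℝ) ≤ (σ₂ (bv 0)).re ^ 2 := sq_nonneg _
    have g3 : (0:ℝ) ≤ (σ₂ (bv 1)).re ^ 2 := sq_nonneg _
    linarith
  have hcoer : ∀ p : Fin 2 → ℤ,
      min y₁ y₂ * ((σ₁ (bv 0)).re * (σ₂ (bv 1)).re
        - (σ₁ (bv 1)).re * (σ₂ (bv 0)).re) ^ 2 / (2 * ((σ₁ (bv 0)).re ^ 2 + (σ₁ (bv 1)).re ^ 2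
        + (σ₂ (bv 0)).re ^ 2 + (σ₂ (bv 1)).re ^ 2) + 1) * ((p 0 : ℝ) ^ 2 + (p 1 : ℝ) ^ 2)
      ≤ quadForm Y p := by
    intro p
    rw [hqf p]
    exact coer_aux _ _ _ _ _ _ _ _ hφ₁ hφ₂
  obtain ⟨hm1low, hm1m2, hm2up⟩ := reduction Y hsymmY _ _ hLpos hccpos hL hcoer
  have hsΔ : Real.sqrt Δr ^ 2 = Δr := Real.sq_sqrt hΔpos.le
  have hsΔpos : 0 < Real.sqrt Δr := Real.sqrt_pos.mpr hΔpos
  have hsqprod : Real.sqrt (y₁ * y₂ * Δr) = Real.sqrt (y₁ * y₂) * Real.sqrt Δr :=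
    Real.sqrt_mul (by positivity) Δr
  have hsz : Real.sqrt (y₁ * y₂) ^ 2 = y₁ * y₂ := Real.sq_sqrt (by positivity)
  refine ⟨hPD, ?_, ?_, hm1m2, ?_⟩
  · rw [hsqrtN, hdY]
  · rw [hsqrtN]
    have heq : 2 / Real.sqrt Δr * Nb * Real.sqrt (y₁ * y₂ * Δr)
        = 2 * Real.sqrt (y₁ * y₂) * Nb := by
      rw [hsqprod]
      have hstep : 2 / Real.sqrt Δr * Nb * (Real.sqrt (y₁ * y₂) * Real.sqrt Δr)
          = 2 * Real.sqrt (y₁ * y₂) * Nb * (Real.sqrt Δr / Real.sqrt Δr) := by ring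
      rw [hstep, div_self (ne_of_gt hsΔpos), mul_one]
    rw [heq]
    exact hm1low
  · rw [hsqrtN]
    have heq : 4 / 3 * Y.det / (2 * Real.sqrt (y₁ * y₂) * Nb)
        = 2 * Real.sqrt Δr / 3 * Nb * Real.sqrt (y₁ * y₂ * Δr) := by
      rw [hdY, hsqprod, div_eq_iff (ne_of_gt hLpos)]
      linear_combination (-(4/3) * Nb^2 * Real.sqrt (y₁ * y₂)^2) * hsΔ
        + (-(4/3) * Nb^2 * Δr) * hsz
    rw [← heq]
    exact hm2up
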